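/- The variance (σ*)² = ∑_{j≥0} j²·w*_j − 1 of the α-shifted offspring distribution equals t*·θ''(t*)/θ'(t*). -/

import Mathlib

open Filter Topology

/-- The offspring generating function `θ(t) = ∑ w_i t^i`. -/
noncomputable def theta (w : ℕ → ℝ) (t : ℝ) : ℝ := ∑' i : ℕ, w i * t ^ i

lemma aux_summable_pow (w : ℕ → ℝ) (hw : ∀ i, 0 ≤ w i) (ρ : ℝ)
    (hρ_sum : ∀ t : ℝ, 0 ≤ t → t < ρ → Summable fun i : ℕ => w i * t ^ i)
    (t : ℝ) (ht0 : 0 ≤ t) (htρ : t < ρ) (k : ℕ) :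
    Summable fun i : ℕ => (i : ℝ) ^ k * w i * t ^ i := by
  set r2 : ℝ := (t + ρ) / 2 with hr2def
  have hr2a : t < r2 := by simp only [hr2def]; linarith
  have hr2b : r2 < ρ := by simp only [hr2def]; linarith
  have hr2pos : 0 < r2 := lt_of_le_of_lt ht0 hr2a
  have hs2 : Summable fun i : ℕ => w i * r2 ^ i := hρ_sum r2 hr2pos.le hr2b
  set S : ℝ := ∑' i, w i * r2 ^ i with hS
  have hterm : ∀ i, w i * r2 ^ i ≤ S :=
    fun i => Summable.le_tsum hs2 i fun j _ => mul_nonneg (hw j) (pow_nonneg hr2pos.le j)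
  have hq1 : |t / r2| < 1 := by
    rw [abs_of_nonneg (div_nonneg ht0 hr2pos.le)]
    rw [div_lt_one hr2pos]; exact hr2a
  have hgeom : Summable fun i : ℕ => (i : ℝ) ^ k * (t / r2) ^ i := by
    have := summable_pow_mul_geometric_of_norm_lt_one (R := ℝ) k
      (r := t / r2) (by rwa [Real.norm_eq_abs])
    exact this
  apply Summable.of_nonneg_of_le
    (fun i => mul_nonneg (mul_nonneg (pow_nonneg (Nat.cast_nonneg i) k) (hw i))
      (pow_nonneg ht0 i))
    (fun i => ?_) (hgeom.mul_left S)
  have ht_eq : t ^ i = r2 ^ i * (t / r2) ^ i := by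
    rw [← mul_pow, mul_div_cancel₀ _ hr2pos.ne']
  calc (i : ℝ) ^ k * w i * t ^ i = (w i * r2 ^ i) * ((i : ℝ) ^ k * (t / r2) ^ i) := by
        rw [ht_eq]; ring
    _ ≤ S * ((i : ℝ) ^ k * (t / r2) ^ i) := by
        apply mul_le_mul_of_nonneg_right (hterm i)
        exact mul_nonneg (pow_nonneg (Nat.cast_nonneg i) k)
          (pow_nonneg (abs_nonneg _ |>.trans (le_of_eq (abs_of_nonneg (div_nonneg ht0 hr2pos.le)))) i |>.trans_eq rfl)

lemma aux_sum1 (w : ℕ → ℝ) (hw : ∀ i, 0 ≤ w i) (ρ : ℝ)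
    (hρ_sum : ∀ t : ℝ, 0 ≤ t → t < ρ → Summable fun i : ℕ => w i * t ^ i)
    (t : ℝ) (ht0 : 0 < t) (htρ : t < ρ) :
    Summable fun i : ℕ => w i * (i : ℝ) * t ^ (i - 1) := by
  have h := (aux_summable_pow w hw ρ hρ_sum t ht0.le htρ 1).mul_right t⁻¹
  apply h.congr
  intro i
  match i with
  | 0 => simp
  | n + 1 =>
    simp only [Nat.add_sub_cancel, pow_one, pow_succ]
    field_simp

lemma aux_sum2 (w : ℕ → ℝ) (hw : ∀ i, 0 ≤ w i) (ρ : ℝ)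
    (hρ_sum : ∀ t : ℝ, 0 ≤ t → t < ρ → Summable fun i : ℕ => w i * t ^ i)
    (t : ℝ) (ht0 : 0 < t) (htρ : t < ρ) :
    Summable fun i : ℕ => w i * (i : ℝ) * ((i - 1 : ℕ) : ℝ) * t ^ (i - 1 - 1) := by
  have h := (aux_summable_pow w hw ρ hρ_sum t ht0.le htρ 2).mul_right (t⁻¹ * t⁻¹)
  apply Summable.of_nonneg_of_le (fun i => ?_) (fun i => ?_) h
  · exact mul_nonneg (mul_nonneg (mul_nonneg (hw i) (Nat.cast_nonneg i)) (Nat.cast_nonneg _))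
      (pow_nonneg ht0.le _)
  · match i with
    | 0 => simp
    | 1 =>
      norm_num
      exact mul_nonneg (mul_nonneg (hw 1) ht0.le) (by positivity)
    | n + 2 =>
      have he1 : n + 2 - 1 = n + 1 := by omega
      have he2 : n + 2 - 1 - 1 = n := by omega
      rw [he1, show n + 1 - 1 = n from rfl]
      have : ((n + 2 : ℕ) : ℝ) ^ 2 * w (n + 2) * t ^ (n + 2) * (t⁻¹ * t⁻¹)
          = ((n + 2 : ℕ) : ℝ) * ((n + 2 : ℕ) : ℝ) * w (n + 2) * t ^ n := by
        have : (t : ℝ) ^ (n + 2) = t ^ n * t * t := by ring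
        rw [this]; field_simp
      rw [this]
      have hle : ((n + 1 : ℕ) : ℝ) ≤ ((n + 2 : ℕ) : ℝ) := by push_cast; linarith
      calc w (n + 2) * ((n + 2 : ℕ) : ℝ) * ((n + 1 : ℕ) : ℝ) * t ^ n
          ≤ w (n + 2) * ((n + 2 : ℕ) : ℝ) * ((n + 2 : ℕ) : ℝ) * t ^ n := by
            apply mul_le_mul_of_nonneg_right _ (pow_nonneg ht0.le n)
            exact mul_le_mul_of_nonneg_left hle (mul_nonneg (hw _) (Nat.cast_nonneg _))
        _ = ((n + 2 : ℕ) : ℝ) * ((n + 2 : ℕ) : ℝ) * w (n + 2) * t ^ n := by ring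

/-- The variance `(σ*)² = ∑ j² w*_j − 1` of the α-shifted offspring distribution
equals `t* θ''(t*) / θ'(t*)`. -/
theorem alpha_shift_variance
    (w : ℕ → ℝ)
    (hw_nonneg : ∀ i, 0 ≤ w i)
    (hw_sum : ∑' i : ℕ, w i = 1)
    (hw_mean : ∑' i : ℕ, (i : ℝ) * w i = 1)
    (hw_one : w 1 ≠ 1)
    (hw_tail : ∃ a > 0, Summable fun i : ℕ => w i * Real.exp (a * i))
    (ρ : ℝ) (hρ : 1 ≤ ρ)
    (hρ_sum : ∀ t : ℝ, 0 ≤ t → t < ρ → Summable fun i : ℕ => w i * t ^ i)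
    (α : ℝ) (hα0 : 0 < α) (hα1 : α < 1)
    (tstar : ℝ) (htstar : tstar ∈ Set.Ioo (0 : ℝ) ρ)
    (C : ℝ) (hCpos : 0 < C)
    (heq : (1 - α) * tstar * deriv (theta w) tstar = theta w tstar - w 0)
    (hC : C = 1 / deriv (theta w) tstar)
    (wstar : ℕ → ℝ)
    (hwstar0 : wstar 0 = α)
    (hwstarj : ∀ j : ℕ, 1 ≤ j → wstar j = C * w j * tstar ^ (j - 1))
    (hwstar_sum : ∑' j : ℕ, wstar j = 1)
    (hwstar_mean : ∑' j : ℕ, (j : ℝ) * wstar j = 1) :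
    (∑' j : ℕ, (j : ℝ) ^ 2 * wstar j) - 1 =
      tstar * deriv (deriv (theta w)) tstar / deriv (theta w) tstar := by
  obtain ⟨ht0, htρ⟩ := htstar
  set r : ℝ := (tstar + ρ) / 2 with hrdef
  have hr1 : tstar < r := by simp only [hrdef]; linarith
  have hr2 : r < ρ := by simp only [hrdef]; linarith
  have hrpos : 0 < r := lt_trans ht0 hr1
  have hmem : tstar ∈ Set.Ioo (-r) r := ⟨by linarith, hr1⟩
  have hopen : IsOpen (Set.Ioo (-r) r) := isOpen_Ioo
  have hconn : IsPreconnected (Set.Ioo (-r) r) := isPreconnected_Ioo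
  have hth : theta w = fun z => ∑' i : ℕ, w i * z ^ i := rfl
  have hu1 : Summable fun i : ℕ => w i * (i : ℝ) * r ^ (i - 1) :=
    aux_sum1 w hw_nonneg ρ hρ_sum r hrpos hr2
  have hu2 : Summable fun i : ℕ => w i * (i : ℝ) * ((i - 1 : ℕ) : ℝ) * r ^ (i - 1 - 1) :=
    aux_sum2 w hw_nonneg ρ hρ_sum r hrpos hr2
  have hsum1t : Summable fun i : ℕ => w i * (i : ℝ) * tstar ^ (i - 1) :=
    aux_sum1 w hw_nonneg ρ hρ_sum tstar ht0 htρ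
  have hsum2t : Summable fun i : ℕ => w i * (i : ℝ) * ((i - 1 : ℕ) : ℝ) * tstar ^ (i - 1 - 1) :=
    aux_sum2 w hw_nonneg ρ hρ_sum tstar ht0 htρ
  have hD1 : ∀ x ∈ Set.Ioo (-r) r, HasDerivAt (fun z => ∑' i : ℕ, w i * z ^ i)
      (∑' i : ℕ, w i * (i : ℝ) * x ^ (i - 1)) x := by
    intro x hx
    refine hasDerivAt_tsum_of_isPreconnected hu1 hopen hconn
      (g := fun i z => w i * z ^ i) (g' := fun i z => w i * (i : ℝ) * z ^ (i - 1))
      (fun i y _ => ?_) (fun i y hy => ?_) hmem (hρ_sum tstar ht0.le htρ) hx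
    · simpa [mul_assoc] using (hasDerivAt_pow i y).const_mul (w i)
    · have hy' : |y| ≤ r := (abs_lt.2 ⟨hy.1, hy.2⟩).le
      calc ‖w i * (i : ℝ) * y ^ (i - 1)‖ = w i * (i : ℝ) * |y| ^ (i - 1) := by
            rw [Real.norm_eq_abs, abs_mul, abs_mul, abs_pow,
              abs_of_nonneg (hw_nonneg i), Nat.abs_cast]
        _ ≤ w i * (i : ℝ) * r ^ (i - 1) :=
            mul_le_mul_of_nonneg_left (pow_le_pow_left₀ (abs_nonneg y) hy' _)
              (mul_nonneg (hw_nonneg i) (Nat.cast_nonneg i))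
  set G : ℝ → ℝ := fun x => ∑' i : ℕ, w i * (i : ℝ) * x ^ (i - 1) with hGdef
  have hD2 : HasDerivAt G
      (∑' i : ℕ, w i * (i : ℝ) * ((i - 1 : ℕ) : ℝ) * tstar ^ (i - 1 - 1)) tstar := by
    refine hasDerivAt_tsum_of_isPreconnected hu2 hopen hconn
      (g := fun i z => w i * (i : ℝ) * z ^ (i - 1))
      (g' := fun i z => w i * (i : ℝ) * ((i - 1 : ℕ) : ℝ) * z ^ (i - 1 - 1))
      (fun i y _ => ?_) (fun i y hy => ?_) hmem hsum1t hmem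
    · simpa [mul_assoc] using (hasDerivAt_pow (i - 1) y).const_mul (w i * (i : ℝ))
    · have hy' : |y| ≤ r := (abs_lt.2 ⟨hy.1, hy.2⟩).le
      calc ‖w i * (i : ℝ) * ((i - 1 : ℕ) : ℝ) * y ^ (i - 1 - 1)‖
          = w i * (i : ℝ) * ((i - 1 : ℕ) : ℝ) * |y| ^ (i - 1 - 1) := by
            rw [Real.norm_eq_abs, abs_mul, abs_mul, abs_mul, abs_pow,
              abs_of_nonneg (hw_nonneg i), Nat.abs_cast, Nat.abs_cast]
        _ ≤ w i * (i : ℝ) * ((i - 1 : ℕ) : ℝ) * r ^ (i - 1 - 1) :=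
            mul_le_mul_of_nonneg_left (pow_le_pow_left₀ (abs_nonneg y) hy' _)
              (mul_nonneg (mul_nonneg (hw_nonneg i) (Nat.cast_nonneg i)) (Nat.cast_nonneg _))
  have hderiv1 : deriv (theta w) tstar = G tstar := by
    rw [hth]; exact (hD1 tstar hmem).deriv
  have hfil : deriv (theta w) =ᶠ[𝓝 tstar] G := by
    apply Filter.eventuallyEq_of_mem (Ioo_mem_nhds hmem.1 hmem.2)
    intro x hx
    rw [hth]; exact (hD1 x hx).deriv
  have hderiv2 : deriv (deriv (theta w)) tstar
      = ∑' i : ℕ, w i * (i : ℝ) * ((i - 1 : ℕ) : ℝ) * tstar ^ (i - 1 - 1) := by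
    rw [hfil.deriv_eq]; exact hD2.deriv
  set Gp : ℝ := ∑' i : ℕ, w i * (i : ℝ) * tstar ^ (i - 1) with hGp
  set Hp : ℝ := ∑' i : ℕ, w i * (i : ℝ) * ((i - 1 : ℕ) : ℝ) * tstar ^ (i - 1 - 1) with hHp
  have hC' : C = 1 / Gp := by rw [hC, hderiv1]
  have hGne : Gp ≠ 0 := by
    intro h
    rw [h] at hC'
    simp at hC'
    exact absurd hC' hCpos.ne'
  have hCG : C * Gp = 1 := by rw [hC']; field_simp
  have hpoint : ∀ j : ℕ, (j : ℝ) ^ 2 * wstar j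
      = tstar * C * (w j * (j : ℝ) * ((j - 1 : ℕ) : ℝ) * tstar ^ (j - 1 - 1))
        + C * (w j * (j : ℝ) * tstar ^ (j - 1)) := by
    intro j
    match j with
    | 0 => simp
    | 1 => rw [hwstarj 1 le_rfl]; norm_num
    | n + 2 =>
      rw [hwstarj (n + 2) (by omega), show n + 2 - 1 = n + 1 from rfl,
        show n + 1 - 1 = n from rfl]
      push_cast
      ring
  have hS : (∑' j : ℕ, (j : ℝ) ^ 2 * wstar j) = tstar * C * Hp + C * Gp := by
    rw [tsum_congr hpoint,
      Summable.tsum_add (hsum2t.mul_left (tstar * C)) (hsum1t.mul_left C),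
      tsum_mul_left, tsum_mul_left]
  rw [hS, hderiv1, hderiv2, hCG, show G tstar = Gp from rfl, hC']
  field_simp
  ring
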